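/- Let (E, V) be an affine space over a field F with V finite-dimensional, let f : E → E be an affine map with linear part f̄, and assume X - 1 divides the minimal polynomial of f̄ (equivalently, the minimal polynomial of f̄ vanishes at 1). If s is a nonempty affine subspace of E invariant under f (f maps s into s) whose direction has dimension exactly τ(f), then the direction of s is contained in the generalized eigenspace maxGenEigenspace(f̄, 1). -/

import Mathlib

open Polynomial

variable {F V E : Type*} [Field F] [AddCommGroup V] [Module F V] [AddTorsor V E]

/-- `τ(α, L)`: the smallest `k ∈ ℕ` such that
`α ∈ range (L - id) + ker ((L - id)^k)`. -/
noncomputable def tau (L : V →ₗ[F] V) (α : V) : ℕ :=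
  sInf {k : ℕ | α ∈ LinearMap.range (L - LinearMap.id : V →ₗ[F] V) ⊔
    LinearMap.ker ((L - LinearMap.id : V →ₗ[F] V) ^ k)}

/-- `τ(f)` for an affine map `f : E → E`: `τ(f(A) -ᵥ A, f.linear)` for a point `A`
(this does not depend on the choice of `A`). -/
noncomputable def tauAff (f : E →ᵃ[F] E) : ℕ :=
  tau f.linear (f (Classical.arbitrary E) -ᵥ (Classical.arbitrary E))

lemma tau_congr (L : V →ₗ[F] V) {α β : V}
    (h : α - β ∈ LinearMap.range (L - LinearMap.id : V →ₗ[F] V)) :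
    tau L α = tau L β := by
  unfold tau
  congr 1
  ext k
  simp only [Set.mem_setOf_eq]
  constructor
  · intro hm
    have := Submodule.sub_mem _ hm (Submodule.mem_sup_left h)
    simpa [sub_sub_cancel] using this
  · intro hm
    have := Submodule.add_mem _ (Submodule.mem_sup_left h) hm
    simpa [sub_add_cancel] using this

/-- Suppose `X - 1` divides the minimal polynomial of `f.linear`. If
`s` is a nonempty `f`-invariant affine subspace of `E` whose direction has dimension
exactly `τ(f)`, then the direction of `s` is contained in the generalized eigenspace
of `f.linear` for eigenvalue 1. -/
theorem direction_le_maxGenEigenspace_of_dim_eq_tau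
    [FiniteDimensional F V] (f : E →ᵃ[F] E)
    (hdvd : X - C 1 ∣ minpoly F f.linear)
    (s : AffineSubspace F E) (hne : (s : Set E).Nonempty)
    (hinv : ∀ P ∈ s, f P ∈ s)
    (hdim : Module.finrank F s.direction = tauAff f) :
    s.direction ≤ Module.End.maxGenEigenspace f.linear 1 := by
  classical
  obtain ⟨A, hA⟩ := hne
  set L : V →ₗ[F] V := f.linear with hL
  set N : V →ₗ[F] V := L - LinearMap.id with hN
  set W : Submodule F V := s.direction with hW
  set α : V := f A -ᵥ A with hα
  -- invariance of W
  have hWL : ∀ v ∈ W, L v ∈ W := by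
    intro v hv
    rw [hW, AffineSubspace.mem_direction_iff_eq_vsub ⟨A, hA⟩] at hv
    obtain ⟨p, hp, q, hq, rfl⟩ := hv
    rw [hL, AffineMap.linearMap_vsub]
    exact AffineSubspace.vsub_mem_direction (hinv p hp) (hinv q hq)
  have hWN : ∀ v ∈ W, N v ∈ W := by
    intro v hv
    have hNv : N v = L v - v := by simp [hN]
    rw [hNv]
    exact sub_mem (hWL v hv) hv
  have hWpow : ∀ (k : ℕ) (v : V), v ∈ W → (N ^ k) v ∈ W := by
    intro k
    induction k with
    | zero => intro v hv; simpa using hv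
    | succ k ih =>
      intro v hv
      rw [pow_succ, Module.End.mul_apply]
      exact ih _ (hWN v hv)
  have hαW : α ∈ W := AffineSubspace.vsub_mem_direction (hinv A hA) hA
  -- τ(f) = τ(α, L)
  have htau : tauAff f = tau L α := by
    unfold tauAff
    apply tau_congr
    have hdiff : (f (Classical.arbitrary E) -ᵥ (Classical.arbitrary E)) - α
        = N ((Classical.arbitrary E) -ᵥ A) := by
      rw [hα, vsub_sub_vsub_comm, hN, LinearMap.sub_apply, LinearMap.id_apply, hL,
        AffineMap.linearMap_vsub]
    rw [hdiff]
    exact ⟨_, rfl⟩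
  have ht : Module.finrank F W = tau L α := by rw [hW, hdim, htau]
  -- trivial case
  by_cases ht0 : tau L α = 0
  · have : W = ⊥ := Submodule.finrank_eq_zero.mp (by rw [ht, ht0])
    exact le_trans (le_of_eq this) bot_le
  -- main case: t := tau L α ≥ 1
  set t : ℕ := tau L α with htdef
  set m : ℕ := Module.finrank F V with hm
  have htm : t ≤ m := ht ▸ (hm ▸ Submodule.finrank_le W)
  have ht1 : 1 ≤ t := Nat.one_le_iff_ne_zero.mpr ht0
  -- stabilization and Fitting facts
  have hstab : LinearMap.ker (N ^ (m + m)) = LinearMap.ker (N ^ m) := by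
    rw [Module.End.ker_pow_eq_ker_pow_finrank_of_le (le_of_eq hm)]
    exact Module.End.ker_pow_eq_ker_pow_finrank_of_le (hm ▸ Nat.le_add_right m m)
  have hdisj : Disjoint (LinearMap.ker (N ^ m)) (LinearMap.range (N ^ m)) := by
    rw [Submodule.disjoint_def]
    intro x hxk hxr
    obtain ⟨y, rfl⟩ := hxr
    have hy : y ∈ LinearMap.ker (N ^ (m + m)) := by
      rw [LinearMap.mem_ker, pow_add, Module.End.mul_apply]
      exact hxk
    rw [hstab, LinearMap.mem_ker] at hy
    exact hy
  have htop : LinearMap.ker (N ^ m) ⊔ LinearMap.range (N ^ m) = ⊤ :=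
    Submodule.eq_top_of_disjoint _ _
      (by rw [add_comm]; exact (LinearMap.finrank_range_add_finrank_ker (N ^ m)).ge) hdisj
  have hrle : LinearMap.range (N ^ m) ≤ LinearMap.range N := by
    have h1m : m = (m - 1) + 1 := by omega
    rw [h1m, pow_succ', Module.End.mul_eq_comp]
    exact LinearMap.range_comp_le_range _ _
  -- the defining set of tau is nonempty, so we get membership facts
  have hSne : {k : ℕ | α ∈ LinearMap.range (L - LinearMap.id : V →ₗ[F] V) ⊔
      LinearMap.ker ((L - LinearMap.id : V →ₗ[F] V) ^ k)}.Nonempty := by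
    refine ⟨m, ?_⟩
    have hle : LinearMap.ker (N ^ m) ⊔ LinearMap.range (N ^ m) ≤
        LinearMap.range N ⊔ LinearMap.ker (N ^ m) :=
      sup_le le_sup_right (hrle.trans le_sup_left)
    have := hle (htop ▸ Submodule.mem_top (x := α))
    simpa [hN] using this
  have h1 : α ∈ LinearMap.range N ⊔ LinearMap.ker (N ^ t) := by
    have := Nat.sInf_mem hSne
    exact this
  have h2 : α ∉ LinearMap.range N ⊔ LinearMap.ker (N ^ (t - 1)) := by
    have : t - 1 ∉ {k : ℕ | α ∈ LinearMap.range (L - LinearMap.id : V →ₗ[F] V) ⊔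
        LinearMap.ker ((L - LinearMap.id : V →ₗ[F] V) ^ k)} :=
      Nat.notMem_of_lt_sInf (by
        have hts : sInf {k : ℕ | α ∈ LinearMap.range (L - LinearMap.id : V →ₗ[F] V) ⊔
            LinearMap.ker ((L - LinearMap.id : V →ₗ[F] V) ^ k)} = t := rfl
        omega)
    simpa [hN] using this
  -- construct α₁ ∈ W ⊓ ker N^m with α - α₁ ∈ range N
  set U : Submodule F V := Submodule.map (N ^ m) W with hU
  have hUW : U ≤ W := by
    rintro x ⟨y, hy, rfl⟩
    exact hWpow m y hy
  have hUrange : U ≤ LinearMap.range (N ^ m) := hU ▸ LinearMap.map_le_range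
  have hinjU : Function.Injective ((N ^ m).domRestrict U) := by
    rw [← LinearMap.ker_eq_bot, Submodule.eq_bot_iff]
    rintro ⟨x, hx⟩ hker
    have hx0 : (N ^ m) x = 0 := by
      simpa [LinearMap.mem_ker, LinearMap.domRestrict_apply] using hker
    exact Subtype.ext
      (Submodule.disjoint_def.mp hdisj x (LinearMap.mem_ker.mpr hx0) (hUrange hx))
  have hfr : Module.finrank F (Submodule.map (N ^ m) U) = Module.finrank F U := by
    rw [← LinearMap.range_domRestrict]
    exact LinearMap.finrank_range_of_inj hinjU
  have hUU : Submodule.map (N ^ m) U = U :=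
    Submodule.eq_of_le_of_finrank_le ((Submodule.map_mono hUW).trans (le_of_eq hU.symm))
      (le_of_eq hfr.symm)
  obtain ⟨β, hβU, hβ⟩ : ∃ β ∈ U, (N ^ m) β = (N ^ m) α := by
    have hmem : (N ^ m) α ∈ Submodule.map (N ^ m) U := by
      rw [hUU, hU]
      exact ⟨α, hαW, rfl⟩
    obtain ⟨β, hβ1, hβ2⟩ := hmem
    exact ⟨β, hβ1, hβ2⟩
  set α₁ : V := α - β with hα₁
  have hα₁W : α₁ ∈ W := sub_mem hαW (hUW hβU)
  have hα₁ker : (N ^ m) α₁ = 0 := by rw [hα₁, map_sub, hβ, sub_self]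
  have hβrange : β ∈ LinearMap.range N := hrle (hUrange hβU)
  have hα₁not : α₁ ∉ LinearMap.range N ⊔ LinearMap.ker (N ^ (t - 1)) := by
    intro hmem
    apply h2
    have hsplit : α = α₁ + β := by rw [hα₁]; abel
    rw [hsplit]
    exact Submodule.add_mem _ hmem (Submodule.mem_sup_left hβrange)
  -- powers of kernels are monotone
  have hkermono : ∀ {a b : ℕ}, a ≤ b → LinearMap.ker (N ^ a) ≤ LinearMap.ker (N ^ b) := by
    intro a b hab x hx
    rw [LinearMap.mem_ker] at hx ⊢
    have hb : b = (b - a) + a := by omega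
    rw [hb, pow_add, Module.End.mul_apply, hx, map_zero]
  -- the iterates N^j α₁, j < t, are linearly independent
  have hindep : LinearIndependent F (fun j : Fin t => (N ^ (j : ℕ)) α₁) := by
    rw [linearIndependent_iff']
    intro sfin g hsum i hi
    by_contra hgi
    set T := sfin.filter (fun j => g j ≠ 0) with hT
    have hTne : T.Nonempty := ⟨i, Finset.mem_filter.mpr ⟨hi, hgi⟩⟩
    set j₀ := T.min' hTne with hj₀
    have hj₀T : j₀ ∈ T := T.min'_mem hTne
    have hg0 : g j₀ ≠ 0 := (Finset.mem_filter.mp hj₀T).2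
    have hj₀min : ∀ j ∈ T, (j₀ : ℕ) ≤ (j : ℕ) := fun j hj => T.min'_le j hj
    have hsumT : ∑ j ∈ T, g j • (N ^ (j : ℕ)) α₁ = 0 := by
      rw [← hsum]
      apply Finset.sum_subset (Finset.filter_subset _ _)
      intro x hx hxT
      have hgx : g x = 0 := by
        by_contra hgx
        exact hxT (Finset.mem_filter.mpr ⟨hx, hgx⟩)
      rw [hgx, zero_smul]
    set y : V := ∑ j ∈ T, g j • (N ^ ((j : ℕ) - (j₀ : ℕ))) α₁ with hy
    have hy0 : (N ^ (j₀ : ℕ)) y = 0 := by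
      rw [hy, map_sum, ← hsumT]
      apply Finset.sum_congr rfl
      intro j hj
      rw [map_smul, ← Module.End.mul_apply, ← pow_add]
      have hje : (j₀ : ℕ) + ((j : ℕ) - (j₀ : ℕ)) = (j : ℕ) := by
        have := hj₀min j hj; omega
      rw [hje]
    set yrest : V := ∑ j ∈ T.erase j₀, g j • (N ^ ((j : ℕ) - (j₀ : ℕ) - 1)) α₁ with hyr
    have hysplit : y = g j₀ • α₁ + N yrest := by
      rw [hy, ← Finset.add_sum_erase _ _ hj₀T]
      congr 1
      · rw [Nat.sub_self, pow_zero, Module.End.one_apply]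
      · rw [hyr, map_sum]
        apply Finset.sum_congr rfl
        intro j hj
        have hne' : (j : ℕ) ≠ (j₀ : ℕ) :=
          fun hh => Finset.ne_of_mem_erase hj (Fin.val_injective hh)
        have hle : (j₀ : ℕ) ≤ (j : ℕ) := hj₀min j (Finset.mem_of_mem_erase hj)
        rw [map_smul]
        congr 1
        rw [← Module.End.mul_apply, ← pow_succ']
        congr 2
        omega
    have hyker : y ∈ LinearMap.ker (N ^ (t - 1)) :=
      hkermono (by have := j₀.isLt; omega) (LinearMap.mem_ker.mpr hy0)
    apply hα₁not
    have hmem : g j₀ • α₁ ∈ LinearMap.range N ⊔ LinearMap.ker (N ^ (t - 1)) := by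
      have heq : g j₀ • α₁ = y - N yrest := by rw [hysplit]; abel
      rw [heq]
      exact Submodule.sub_mem _ (Submodule.mem_sup_right hyker)
        (Submodule.mem_sup_left ⟨yrest, rfl⟩)
    have := Submodule.smul_mem _ (g j₀)⁻¹ hmem
    rwa [inv_smul_smul₀ hg0] at this
  -- conclude W ≤ ker N^m
  have hmem₁ : ∀ j : ℕ, (N ^ j) α₁ ∈ W ⊓ LinearMap.ker (N ^ m) := by
    intro j
    refine Submodule.mem_inf.mpr ⟨hWpow j α₁ hα₁W, ?_⟩
    rw [LinearMap.mem_ker, ← Module.End.mul_apply, pow_mul_comm, Module.End.mul_apply,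
      hα₁ker, map_zero]
  have hv : LinearIndependent F (fun j : Fin t =>
      (⟨(N ^ (j : ℕ)) α₁, hmem₁ j⟩ : (W ⊓ LinearMap.ker (N ^ m) : Submodule F V))) :=
    LinearIndependent.of_comp (W ⊓ LinearMap.ker (N ^ m)).subtype hindep
  have hcard : t ≤ Module.finrank F (W ⊓ LinearMap.ker (N ^ m) : Submodule F V) := by
    simpa using hv.fintype_card_le_finrank
  have hWeq : (W ⊓ LinearMap.ker (N ^ m) : Submodule F V) = W :=
    Submodule.eq_of_le_of_finrank_le inf_le_left (by rw [ht]; exact hcard)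
  intro x hx
  rw [Module.End.mem_maxGenEigenspace]
  refine ⟨m, ?_⟩
  have hxW : x ∈ W := hx
  have hxk : x ∈ LinearMap.ker (N ^ m) := (Submodule.mem_inf.mp (hWeq.symm ▸ hxW)).2
  have hNe : f.linear - (1 : F) • (1 : Module.End F V) = N := by
    rw [one_smul, Module.End.one_eq_id, hN, hL]
  rw [hNe]
  exact LinearMap.mem_ker.mp hxk
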